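/- Let F : [a, b] → ℂ be continuous with 0 < a < b, and let p ≥ 1. For any subdivision a = t₀ < t₁ < ⋯ < t_m = b with b ≤ 2a, one has Σ_{j=1}^{m} |∫_{t_{j-1}}^{t_j} F(t) dt/t|^p ≤ ∫_{a}^{b} |F(t)|^p dt/t. -/

import Mathlib

open intervalIntegral MeasureTheory Set

/-- Jensen-type inequality: for a nonnegative integrable function on `[c,d]`,
`(∫ g)^p ≤ (d-c)^(p-1) * ∫ g^p`. -/
lemma jensen_rpow_interval (c d : ℝ) (hcd : c < d) (p : ℝ) (hp : 1 ≤ p) (g : ℝ → ℝ)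
    (hg : ∀ x ∈ Set.Ioc c d, 0 ≤ g x)
    (hgi : IntegrableOn g (Set.Ioc c d))
    (hgpi : IntegrableOn (fun x => g x ^ p) (Set.Ioc c d)) :
    (∫ s in c..d, g s) ^ p ≤ (d - c) ^ (p - 1) * ∫ s in c..d, g s ^ p := by
  set μ := volume.restrict (Set.Ioc c d) with hμ
  have huniv : μ Set.univ = ENNReal.ofReal (d - c) := by
    simp [hμ, Measure.restrict_apply, Real.volume_Ioc]
  haveI : IsFiniteMeasure μ := ⟨by rw [huniv]; exact ENNReal.ofReal_lt_top⟩
  haveI : NeZero μ := ⟨by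
    intro h
    rw [h] at huniv
    simp only [Measure.coe_zero, Pi.zero_apply] at huniv
    exact (ENNReal.ofReal_pos.mpr (by linarith)).ne' huniv.symm⟩
  have hdc : (0:ℝ) < d - c := by linarith
  have key : (⨍ x, g x ∂μ) ^ p ≤ ⨍ x, g x ^ p ∂μ := by
    refine (convexOn_rpow hp).map_average_le ?_ isClosed_Ici ?_ ?_ ?_
    · exact (continuousOn_id.rpow_const fun x _ => Or.inr (by linarith))
    · exact (ae_restrict_iff' measurableSet_Ioc).2 (Filter.Eventually.of_forall hg)
    · exact hgi
    · exact hgpi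
  have havg : ∀ (f : ℝ → ℝ), (⨍ x, f x ∂μ) = (d - c)⁻¹ * ∫ s in c..d, f s := by
    intro f
    rw [average_eq, measureReal_def, huniv, ENNReal.toReal_ofReal hdc.le, smul_eq_mul,
      intervalIntegral.integral_of_le hcd.le]
  rw [havg, havg] at key
  have hint_nonneg : 0 ≤ ∫ s in c..d, g s := by
    rw [intervalIntegral.integral_of_le hcd.le]
    exact setIntegral_nonneg measurableSet_Ioc hg
  have h1 : ((d - c)⁻¹ * ∫ s in c..d, g s) ^ p
      = (d - c)⁻¹ ^ p * (∫ s in c..d, g s) ^ p :=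
    Real.mul_rpow (by positivity) hint_nonneg
  rw [h1] at key
  have h2 : (d - c)⁻¹ ^ p = ((d - c) ^ p)⁻¹ := Real.inv_rpow hdc.le p
  rw [h2] at key
  have hpow : (0:ℝ) < (d - c) ^ p := Real.rpow_pos_of_pos hdc p
  calc (∫ s in c..d, g s) ^ p
      = (d - c) ^ p * (((d - c) ^ p)⁻¹ * (∫ s in c..d, g s) ^ p) := by
        field_simp
    _ ≤ (d - c) ^ p * ((d - c)⁻¹ * ∫ s in c..d, g s ^ p) :=
        mul_le_mul_of_nonneg_left key hpow.le
    _ = (d - c) ^ (p - 1) * ∫ s in c..d, g s ^ p := by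
        rw [← mul_assoc]
        congr 1
        rw [← Real.rpow_neg_one (d - c), ← Real.rpow_add hdc]
        ring_nf

/-- Pointwise short-variation bound: for a continuous `F` on `[a,b]` with `b ≤ 2a` and
any subdivision `a = t₀ < ⋯ < t_m = b`, the `ℓ^p` sum of the increments
`∫_{t_{j-1}}^{t_j} F(t) dt/t` is bounded by `∫_a^b |F(t)|^p dt/t`. -/
theorem short_variation_pointwise_bound (a b : ℝ) (ha : 0 < a) (hab : a < b)
    (hb2 : b ≤ 2 * a) (p : ℝ) (hp : 1 ≤ p) (F : ℝ → ℂ)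
    (hF : ContinuousOn F (Set.Icc a b))
    (m : ℕ) (hm : 0 < m) (t : ℕ → ℝ) (ht0 : t 0 = a) (htm : t m = b)
    (hmono : ∀ i j, i < j → j ≤ m → t i < t j) :
    ∑ j ∈ Finset.range m, ‖∫ s in t j..t (j+1), F s / (s:ℂ)‖ ^ p
      ≤ ∫ s in a..b, ‖F s‖ ^ p / s := by
  -- monotonicity facts about t
  have hmono' : ∀ i j, i ≤ j → j ≤ m → t i ≤ t j := by
    intro i j hij hjm
    rcases eq_or_lt_of_le hij with rfl | h
    · exact le_rfl
    · exact (hmono i j h hjm).le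
  have hp0 : 0 ≤ p := by linarith
  have hmem : ∀ j, j ≤ m → t j ∈ Set.Icc a b := fun j hj =>
    ⟨ht0 ▸ hmono' 0 j (Nat.zero_le _) hj, htm ▸ hmono' j m hj le_rfl⟩
  -- continuity facts
  have hne : ∀ x ∈ Set.Icc a b, x ≠ 0 := fun x hx => (lt_of_lt_of_le ha hx.1).ne'
  have hcont_g : ContinuousOn (fun s => ‖F s‖ / s) (Set.Icc a b) :=
    hF.norm.div continuousOn_id hne
  have hcont_gp : ContinuousOn (fun s => (‖F s‖ / s) ^ p) (Set.Icc a b) :=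
    hcont_g.rpow_const fun x _ => Or.inr hp0
  have hcont_tgt : ContinuousOn (fun s => ‖F s‖ ^ p / s) (Set.Icc a b) :=
    (hF.norm.rpow_const fun x _ => Or.inr hp0).div continuousOn_id hne
  -- per-interval bound
  have step : ∀ j < m, ‖∫ s in t j..t (j+1), F s / (s:ℂ)‖ ^ p
      ≤ ∫ s in t j..t (j+1), ‖F s‖ ^ p / s := by
    intro j hj
    set c := t j with hc
    set d := t (j+1) with hd
    have hcd : c < d := hmono j (j+1) (Nat.lt_succ_self j) hj
    have hcmem : c ∈ Set.Icc a b := hmem j hj.le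
    have hdmem : d ∈ Set.Icc a b := hmem (j+1) hj
    have hsub : Set.Icc c d ⊆ Set.Icc a b := Set.Icc_subset_Icc hcmem.1 hdmem.2
    have hsub' : Set.Ioc c d ⊆ Set.Icc a b := Set.Ioc_subset_Icc_self.trans hsub
    have huicc : Set.uIcc c d = Set.Icc c d := Set.uIcc_of_le hcd.le
    have hgint : IntervalIntegrable (fun s => ‖F s‖ / s) volume c d := by
      apply ContinuousOn.intervalIntegrable
      rw [huicc]; exact hcont_g.mono hsub
    have hgpint : IntervalIntegrable (fun s => (‖F s‖ / s) ^ p) volume c d := by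
      apply ContinuousOn.intervalIntegrable
      rw [huicc]; exact hcont_gp.mono hsub
    have htgtint : IntervalIntegrable (fun s => ‖F s‖ ^ p / s) volume c d := by
      apply ContinuousOn.intervalIntegrable
      rw [huicc]; exact hcont_tgt.mono hsub
    -- Step A : norm of integral bounded by integral of ‖F s‖/s
    have stepA : ‖∫ s in c..d, F s / (s:ℂ)‖ ≤ ∫ s in c..d, ‖F s‖ / s := by
      refine (intervalIntegral.norm_integral_le_integral_norm hcd.le).trans_eq ?_
      apply intervalIntegral.integral_congr
      intro x hx
      rw [huicc] at hx
      have hx0 : 0 < x := lt_of_lt_of_le ha (hsub hx).1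
      simp only [norm_div, Complex.norm_real, Real.norm_eq_abs, abs_of_pos hx0]
    -- Step B : raise to power p
    have stepB : ‖∫ s in c..d, F s / (s:ℂ)‖ ^ p ≤ (∫ s in c..d, ‖F s‖ / s) ^ p :=
      Real.rpow_le_rpow (norm_nonneg _) stepA hp0
    -- Step C : Jensen
    have stepC : (∫ s in c..d, ‖F s‖ / s) ^ p
        ≤ (d - c) ^ (p - 1) * ∫ s in c..d, (‖F s‖ / s) ^ p := by
      apply jensen_rpow_interval c d hcd p hp
      · intro x hx
        have hx0 : 0 < x := lt_of_lt_of_le ha (hsub' hx).1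
        positivity
      · exact (intervalIntegrable_iff_integrableOn_Ioc_of_le hcd.le).1 hgint
      · exact (intervalIntegrable_iff_integrableOn_Ioc_of_le hcd.le).1 hgpint
    -- Step D : compare integrands
    have stepD : (d - c) ^ (p - 1) * ∫ s in c..d, (‖F s‖ / s) ^ p
        ≤ ∫ s in c..d, ‖F s‖ ^ p / s := by
      rw [← intervalIntegral.integral_const_mul]
      apply intervalIntegral.integral_mono_on hcd.le (hgpint.const_mul _) htgtint
      intro x hx
      have hxab := hsub hx
      have hx0 : 0 < x := lt_of_lt_of_le ha hxab.1
      have hL : d - c ≤ x := by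
        have := hcmem.1; have := hdmem.2
        nlinarith [hxab.1]
      have h1 : (d - c) ^ (p - 1) ≤ x ^ (p - 1) :=
        Real.rpow_le_rpow (by linarith) hL (by linarith)
      rw [Real.div_rpow (norm_nonneg _) hx0.le]
      have hxp : (0:ℝ) < x ^ p := Real.rpow_pos_of_pos hx0 p
      calc (d - c) ^ (p - 1) * (‖F x‖ ^ p / x ^ p)
          ≤ x ^ (p - 1) * (‖F x‖ ^ p / x ^ p) :=
            mul_le_mul_of_nonneg_right h1 (by positivity)
        _ = ‖F x‖ ^ p / x := by
            rw [Real.rpow_sub hx0, Real.rpow_one]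
            field_simp
    exact stepB.trans (stepC.trans stepD)
  -- integrability of target on each subinterval
  have hint : ∀ k < m, IntervalIntegrable (fun s => ‖F s‖ ^ p / s) volume (t k) (t (k+1)) := by
    intro k hk
    apply ContinuousOn.intervalIntegrable
    refine hcont_tgt.mono ?_
    rw [Set.uIcc_of_le (hmono k (k+1) (Nat.lt_succ_self k) hk).le]
    exact Set.Icc_subset_Icc (hmem k hk.le).1 (hmem (k+1) hk).2
  calc ∑ j ∈ Finset.range m, ‖∫ s in t j..t (j+1), F s / (s:ℂ)‖ ^ p
      ≤ ∑ j ∈ Finset.range m, ∫ s in t j..t (j+1), ‖F s‖ ^ p / s :=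
        Finset.sum_le_sum fun j hj => step j (Finset.mem_range.1 hj)
    _ = ∫ s in (t 0)..(t m), ‖F s‖ ^ p / s :=
        intervalIntegral.sum_integral_adjacent_intervals hint
    _ = ∫ s in a..b, ‖F s‖ ^ p / s := by rw [ht0, htm]
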